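/- Let t : ℤ² → K be a map into a field K such that for all u, v ∈ ℤ, t(u,v+1)·t(u+1,v) − t(u+1,v+1)·t(u,v) = 1 (SL₂-tiling condition), and such that t is nowhere zero. Fix u ∈ ℤ and suppose there exists v with t(u+1,v) ≠ 0. Then there exists a unique α ∈ K such that t(u,v) + t(u+2,v) = α·t(u+1,v) for all v ∈ ℤ, provided t(u+1,v) ≠ 0 for all v. -/

import Mathlib

/-- Linearization coefficient of a column of an SL₂-tiling: if `t` is an
SL₂-tiling which is nowhere zero, then for each `u` there is a unique `α`
with `t(u,v) + t(u+2,v) = α·t(u+1,v)` for all `v`. -/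
theorem stmt_5 {K : Type*} [Field K] (t : ℤ → ℤ → K)
    (hSL : ∀ u v : ℤ, t u (v + 1) * t (u + 1) v - t (u + 1) (v + 1) * t u v = 1)
    (hnz : ∀ u v : ℤ, t u v ≠ 0) (u : ℤ) :
    ∃! α : K, ∀ v : ℤ, t u v + t (u + 2) v = α * t (u + 1) v := by
  have key : ∀ v : ℤ, (t u v + t (u + 2) v) * t (u + 1) (v + 1)
      = (t u (v + 1) + t (u + 2) (v + 1)) * t (u + 1) v := by
    intro v
    have h1 := hSL u v
    have h2 := hSL (u + 1) v
    have e : u + 1 + 1 = u + 2 := by ring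
    rw [e] at h2
    linear_combination h2 - h1
  set α : K := (t u 0 + t (u + 2) 0) / t (u + 1) 0 with hα
  have hall : ∀ v : ℤ, t u v + t (u + 2) v = α * t (u + 1) v := by
    have main : ∀ v : ℤ, (t u v + t (u + 2) v) / t (u + 1) v = α := by
      intro v
      induction v using Int.induction_on with
      | zero => rfl
      | succ n ih =>
        rw [← ih, div_eq_div_iff (hnz _ _) (hnz _ _)]
        exact (key n).symm
      | pred n ih =>
        rw [← ih, div_eq_div_iff (hnz _ _) (hnz _ _)]
        have := key (-(n : ℤ) - 1)
        have e : (-(n : ℤ) - 1) + 1 = -n := by ring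
        rw [e] at this
        exact this
    intro v
    exact (div_eq_iff (hnz _ _)).mp (main v)
  refine ⟨α, hall, ?_⟩
  intro β hβ
  have h0 := hβ 0
  have h1 := hall 0
  have := h0.symm.trans h1
  exact mul_right_cancel₀ (hnz (u + 1) 0) this
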